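/- Let μ₁ be the smallest eigenvalue of E[P] and B(ω) := 1 − ω(2 − ω)·μ₁. For every ω ∈ [0, 2], every ε₀ ∈ ℝⁿ, and every k ≥ 0, the average of the squared errors over all sequences of k uniformly chosen indices satisfies (1/mᵏ)·∑_{(i₁,…,i_k) ∈ {1,…,m}ᵏ} ‖(I − ωP_{i_k})⋯(I − ωP_{i₁})ε₀‖² ≤ B(ω)ᵏ·‖ε₀‖². -/

import Mathlib

open Matrix


lemma quad_lower {n : ℕ} {A : Matrix (Fin n) (Fin n) ℝ} (hA : A.IsHermitian) {μ : ℝ}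
    (hμ : ∀ i, μ ≤ hA.eigenvalues i) (x : Fin n → ℝ) :
    μ * (x ⬝ᵥ x) ≤ x ⬝ᵥ A.mulVec x := by
  set U : Matrix (Fin n) (Fin n) ℝ := (hA.eigenvectorUnitary : Matrix (Fin n) (Fin n) ℝ) with hU
  have hUU : U * Uᵀ = 1 := by
    have := (Matrix.mem_unitaryGroup_iff).mp hA.eigenvectorUnitary.2
    rwa [star_eq_conjTranspose, conjTranspose_eq_transpose_of_trivial] at this
  set y : Fin n → ℝ := Uᵀ.mulVec x with hy
  have hyy : y ⬝ᵥ y = x ⬝ᵥ x := by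
    rw [hy, dotProduct_mulVec, vecMul_transpose, mulVec_mulVec, hUU, one_mulVec]
  have hAx : x ⬝ᵥ A.mulVec x = ∑ i, hA.eigenvalues i * (y i)^2 := by
    conv_lhs => rw [hA.spectral_theorem]
    rw [Unitary.conjStarAlgAut_apply, star_eq_conjTranspose, conjTranspose_eq_transpose_of_trivial,
      ← mulVec_mulVec, ← mulVec_mulVec, dotProduct_mulVec, ← mulVec_transpose, ← hU, ← hy]
    simp [mulVec_diagonal, dotProduct, sq]
    apply Finset.sum_congr rfl; intro i _; ring
  rw [hAx, ← hyy, dotProduct, Finset.mul_sum]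
  apply Finset.sum_le_sum
  intro i _
  nlinarith [hμ i, mul_self_nonneg (y i)]

lemma step_id {n : ℕ} {P : Matrix (Fin n) (Fin n) ℝ} (hs : Pᵀ = P) (hp : P * P = P)
    (ω : ℝ) (x : Fin n → ℝ) :
    ((1 - ω • P) *ᵥ x) ⬝ᵥ ((1 - ω • P) *ᵥ x)
      = x ⬝ᵥ x - ω * (2 - ω) * (x ⬝ᵥ (P *ᵥ x)) := by
  have h1 : (1 - ω • P) *ᵥ x = x - ω • (P *ᵥ x) := by
    rw [sub_mulVec, one_mulVec, smul_mulVec]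
  have h2 : (P *ᵥ x) ⬝ᵥ (P *ᵥ x) = x ⬝ᵥ (P *ᵥ x) := by
    conv_rhs => rw [← hp, ← mulVec_mulVec, dotProduct_mulVec, ← mulVec_transpose, hs]
  have h3 : (P *ᵥ x) ⬝ᵥ x = x ⬝ᵥ (P *ᵥ x) := dotProduct_comm _ _
  simp only [h1, sub_dotProduct, dotProduct_sub, smul_dotProduct, dotProduct_smul,
    smul_eq_mul, h2, h3]
  ring

lemma sum_step {n m : ℕ} (hm : 0 < m)
    (P : Fin m → Matrix (Fin n) (Fin n) ℝ)
    (hPsym : ∀ i, (P i)ᵀ = P i) (hPproj : ∀ i, P i * P i = P i)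
    (EP : Matrix (Fin n) (Fin n) ℝ) (hEP : EP = (1 / (m : ℝ)) • ∑ i, P i)
    (ω : ℝ) (x : Fin n → ℝ) :
    ∑ i, ((1 - ω • P i) *ᵥ x) ⬝ᵥ ((1 - ω • P i) *ᵥ x)
      = (m : ℝ) * (x ⬝ᵥ x) - ω * (2 - ω) * (m : ℝ) * (x ⬝ᵥ EP *ᵥ x) := by
  have hm' : (m : ℝ) ≠ 0 := Nat.cast_ne_zero.mpr hm.ne'
  have hS : (∑ i, P i) = (m : ℝ) • EP := by
    rw [hEP, smul_smul]
    field_simp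
    rw [one_smul]
  have h1 : ∀ i : Fin m, ((1 - ω • P i) *ᵥ x) ⬝ᵥ ((1 - ω • P i) *ᵥ x)
      = x ⬝ᵥ x - ω * (2 - ω) * (x ⬝ᵥ (P i *ᵥ x)) :=
    fun i => step_id (hPsym i) (hPproj i) ω x
  have h2 : ∑ i, (x ⬝ᵥ (P i *ᵥ x)) = (m : ℝ) * (x ⬝ᵥ EP *ᵥ x) := by
    have hmv : (∑ i, P i) *ᵥ x = ∑ i, P i *ᵥ x := by
      ext j
      simp only [mulVec, dotProduct, Matrix.sum_apply, Finset.sum_mul, Finset.sum_apply]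
      rw [Finset.sum_comm]
    have : ∑ i, (x ⬝ᵥ (P i *ᵥ x)) = x ⬝ᵥ ((∑ i, P i) *ᵥ x) := by
      rw [hmv]
      simp only [dotProduct, Finset.mul_sum, Finset.sum_apply]
      rw [Finset.sum_comm]
    rw [this, hS, smul_mulVec, dotProduct_smul, smul_eq_mul]
  rw [Finset.sum_congr rfl fun i _ => h1 i, Finset.sum_sub_distrib, Finset.sum_const,
    ← Finset.mul_sum, h2, Finset.card_univ, Fintype.card_fin]
  ring

lemma avg_bound {n m : ℕ} (hm : 0 < m)
    (P : Fin m → Matrix (Fin n) (Fin n) ℝ)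
    (hPsym : ∀ i, (P i)ᵀ = P i) (hPproj : ∀ i, P i * P i = P i)
    (EP : Matrix (Fin n) (Fin n) ℝ) (hEP : EP = (1 / (m : ℝ)) • ∑ i, P i)
    (μ₁ : ℝ)
    (hμ₁ : IsLeast {r : ℝ | ∃ v : Fin n → ℝ, v ≠ 0 ∧ EP.mulVec v = r • v} μ₁)
    (ω : ℝ) (hω : ω ∈ Set.Icc (0 : ℝ) 2) (x : Fin n → ℝ) :
    (1 / (m : ℝ)) * ∑ i, ((1 - ω • P i) *ᵥ x) ⬝ᵥ ((1 - ω • P i) *ᵥ x)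
      ≤ (1 - ω * (2 - ω) * μ₁) * (x ⬝ᵥ x) := by
  have hm' : (0 : ℝ) < (m : ℝ) := Nat.cast_pos.mpr hm
  have hEPh : EP.IsHermitian := by
    rw [Matrix.IsHermitian, conjTranspose_eq_transpose_of_trivial, hEP,
      Matrix.transpose_smul]
    congr 1
    rw [Matrix.transpose_sum]
    exact Finset.sum_congr rfl fun i _ => hPsym i
  have hev : ∀ i, μ₁ ≤ hEPh.eigenvalues i := by
    intro i
    apply hμ₁.2
    refine ⟨⇑(hEPh.eigenvectorBasis i), ?_, hEPh.mulVec_eigenvectorBasis i⟩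
    have hb : hEPh.eigenvectorBasis i ≠ 0 := hEPh.eigenvectorBasis.toBasis.ne_zero i |>.imp ?_ |> id
    · intro h
      apply hb
      ext j
      exact congrFun h j
    · simp [OrthonormalBasis.coe_toBasis]
  have hquad : μ₁ * (x ⬝ᵥ x) ≤ x ⬝ᵥ EP *ᵥ x := quad_lower hEPh hev x
  have hsum := sum_step hm P hPsym hPproj EP hEP ω x
  have hωn : 0 ≤ ω * (2 - ω) := by nlinarith [hω.1, hω.2]
  rw [hsum]
  rw [div_mul_eq_mul_div, div_le_iff₀ hm']
  nlinarith [hquad, hωn, mul_le_mul_of_nonneg_left hquad hωn]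

lemma B_nonneg {n m : ℕ} (hm : 0 < m)
    (P : Fin m → Matrix (Fin n) (Fin n) ℝ)
    (hPsym : ∀ i, (P i)ᵀ = P i) (hPproj : ∀ i, P i * P i = P i)
    (EP : Matrix (Fin n) (Fin n) ℝ) (hEP : EP = (1 / (m : ℝ)) • ∑ i, P i)
    (μ₁ : ℝ)
    (hμ₁ : IsLeast {r : ℝ | ∃ v : Fin n → ℝ, v ≠ 0 ∧ EP.mulVec v = r • v} μ₁)
    (ω : ℝ) : 0 ≤ 1 - ω * (2 - ω) * μ₁ := by
  obtain ⟨v, hv0, hvev⟩ := hμ₁.1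
  have hm' : (0 : ℝ) < (m : ℝ) := Nat.cast_pos.mpr hm
  have hsum := sum_step hm P hPsym hPproj EP hEP ω v
  have hvEP : v ⬝ᵥ EP *ᵥ v = μ₁ * (v ⬝ᵥ v) := by
    rw [hvev, dotProduct_smul, smul_eq_mul]
  have hdnn : ∀ w : Fin n → ℝ, 0 ≤ w ⬝ᵥ w :=
    fun w => Finset.sum_nonneg fun i _ => mul_self_nonneg _
  have hpos : 0 < v ⬝ᵥ v := by
    rcases (hdnn v).lt_or_eq with h | h
    · exact h
    · exact absurd (dotProduct_self_eq_zero.mp h.symm) hv0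
  have hnn : 0 ≤ ∑ i, ((1 - ω • P i) *ᵥ v) ⬝ᵥ ((1 - ω • P i) *ᵥ v) :=
    Finset.sum_nonneg fun i _ => hdnn _
  rw [hsum, hvEP] at hnn
  nlinarith [hnn, mul_pos hm' hpos]

/-- **the B-bound, k steps.** Let `μ₁` be the smallest eigenvalue of
`E[P] := (1/m)∑ᵢ Pᵢ` and `B(ω) := 1 − ω(2 − ω)·μ₁`. For every `ω ∈ [0, 2]`, `ε₀ ∈ ℝⁿ` and
`k ≥ 0`, the average of `‖(I − ωP_{i_k})⋯(I − ωP_{i₁})ε₀‖²` over all sequences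
`(i₁, …, i_k) ∈ {1, …, m}ᵏ` is at most `B(ω)ᵏ·‖ε₀‖²`. -/
theorem stmt_4 {n m : ℕ} (hm : 0 < m)
    (P : Fin m → Matrix (Fin n) (Fin n) ℝ)
    (hPsym : ∀ i, (P i)ᵀ = P i) (hPproj : ∀ i, P i * P i = P i)
    (EP : Matrix (Fin n) (Fin n) ℝ) (hEP : EP = (1 / (m : ℝ)) • ∑ i, P i)
    (μ₁ : ℝ)
    (hμ₁ : IsLeast {r : ℝ | ∃ v : Fin n → ℝ, v ≠ 0 ∧ EP.mulVec v = r • v} μ₁)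
    (ω : ℝ) (hω : ω ∈ Set.Icc (0 : ℝ) 2) (ε₀ : Fin n → ℝ) (k : ℕ) :
    (1 / (m : ℝ) ^ k) * ∑ s : Fin k → Fin m,
        (((List.ofFn fun j : Fin k => (1 - ω • P (s j))).reverse.prod).mulVec ε₀) ⬝ᵥ
        (((List.ofFn fun j : Fin k => (1 - ω • P (s j))).reverse.prod).mulVec ε₀)
      ≤ (1 - ω * (2 - ω) * μ₁) ^ k * (ε₀ ⬝ᵥ ε₀) := by
  have hm' : (0 : ℝ) < (m : ℝ) := Nat.cast_pos.mpr hm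
  have hB : 0 ≤ 1 - ω * (2 - ω) * μ₁ := B_nonneg hm P hPsym hPproj EP hEP μ₁ hμ₁ ω
  induction k generalizing ε₀ with
  | zero => simp
  | succ k ih =>
    have hsplit : ∀ (i : Fin m) (t : Fin k → Fin m),
        (List.ofFn fun j : Fin (k+1) => (1 - ω • P ((Fin.cons i t : Fin (k+1) → Fin m) j))).reverse.prod
          = (List.ofFn fun j : Fin k => (1 - ω • P (t j))).reverse.prod * (1 - ω • P i) := by
      intro i t
      rw [List.ofFn_succ]
      simp [Fin.cons_succ, Fin.cons_zero, List.reverse_cons, List.prod_append]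
    have hsum : ∑ s : Fin (k+1) → Fin m,
        (((List.ofFn fun j : Fin (k+1) => (1 - ω • P (s j))).reverse.prod).mulVec ε₀) ⬝ᵥ
        (((List.ofFn fun j : Fin (k+1) => (1 - ω • P (s j))).reverse.prod).mulVec ε₀)
        = ∑ i : Fin m, ∑ t : Fin k → Fin m,
          (((List.ofFn fun j : Fin k => (1 - ω • P (t j))).reverse.prod).mulVec
            ((1 - ω • P i) *ᵥ ε₀)) ⬝ᵥ
          (((List.ofFn fun j : Fin k => (1 - ω • P (t j))).reverse.prod).mulVec
            ((1 - ω • P i) *ᵥ ε₀)) := by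
      rw [← Equiv.sum_comp (Fin.consEquiv fun _ : Fin (k+1) => Fin m), Fintype.sum_prod_type]
      refine Finset.sum_congr rfl fun i _ => Finset.sum_congr rfl fun t _ => ?_
      rw [show (Fin.consEquiv fun _ : Fin (k+1) => Fin m) (i, t) = (Fin.cons i t : Fin (k+1) → Fin m) from rfl,
        hsplit i t, ← mulVec_mulVec]
    rw [hsum]
    have key : ∀ i : Fin m,
        (1 / (m : ℝ) ^ k) * ∑ t : Fin k → Fin m,
          (((List.ofFn fun j : Fin k => (1 - ω • P (t j))).reverse.prod).mulVec
            ((1 - ω • P i) *ᵥ ε₀)) ⬝ᵥ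
          (((List.ofFn fun j : Fin k => (1 - ω • P (t j))).reverse.prod).mulVec
            ((1 - ω • P i) *ᵥ ε₀))
        ≤ (1 - ω * (2 - ω) * μ₁) ^ k * (((1 - ω • P i) *ᵥ ε₀) ⬝ᵥ ((1 - ω • P i) *ᵥ ε₀)) :=
      fun i => ih ((1 - ω • P i) *ᵥ ε₀)
    calc (1 / (m : ℝ) ^ (k+1)) * ∑ i : Fin m, ∑ t : Fin k → Fin m,
          (((List.ofFn fun j : Fin k => (1 - ω • P (t j))).reverse.prod).mulVec
            ((1 - ω • P i) *ᵥ ε₀)) ⬝ᵥ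
          (((List.ofFn fun j : Fin k => (1 - ω • P (t j))).reverse.prod).mulVec
            ((1 - ω • P i) *ᵥ ε₀))
        = (1 / (m : ℝ)) * ∑ i : Fin m, (1 / (m : ℝ) ^ k) * ∑ t : Fin k → Fin m,
          (((List.ofFn fun j : Fin k => (1 - ω • P (t j))).reverse.prod).mulVec
            ((1 - ω • P i) *ᵥ ε₀)) ⬝ᵥ
          (((List.ofFn fun j : Fin k => (1 - ω • P (t j))).reverse.prod).mulVec
            ((1 - ω • P i) *ᵥ ε₀)) := by
          rw [Finset.mul_sum, Finset.mul_sum]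
          refine Finset.sum_congr rfl fun i _ => ?_
          rw [← mul_assoc]
          congr 1
          rw [pow_succ]
          field_simp
      _ ≤ (1 / (m : ℝ)) * ∑ i : Fin m,
            (1 - ω * (2 - ω) * μ₁) ^ k * (((1 - ω • P i) *ᵥ ε₀) ⬝ᵥ ((1 - ω • P i) *ᵥ ε₀)) := by
          apply mul_le_mul_of_nonneg_left _ (by positivity)
          exact Finset.sum_le_sum fun i _ => key i
      _ = (1 - ω * (2 - ω) * μ₁) ^ k * ((1 / (m : ℝ)) * ∑ i : Fin m,
            (((1 - ω • P i) *ᵥ ε₀) ⬝ᵥ ((1 - ω • P i) *ᵥ ε₀))) := by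
          rw [← Finset.mul_sum]
          ring
      _ ≤ (1 - ω * (2 - ω) * μ₁) ^ k * ((1 - ω * (2 - ω) * μ₁) * (ε₀ ⬝ᵥ ε₀)) := by
          apply mul_le_mul_of_nonneg_left _ (pow_nonneg hB k)
          exact avg_bound hm P hPsym hPproj EP hEP μ₁ hμ₁ ω hω ε₀
      _ = (1 - ω * (2 - ω) * μ₁) ^ (k+1) * (ε₀ ⬝ᵥ ε₀) := by ring
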